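/- (Adjacent clusters) Let m ≥ 2 and let p = 2^{m−1}t + s and p' = 2^{m−1}t' + s' be points of X_m with t,t' ∈ X₁, s,s' ∈ Q_{m−1}, and t ≠ t'. If p and p' are at squared Euclidean distance 4 (Euclidean distance 2), then t and t' differ in exactly one coordinate and that difference has absolute value 2; moreover in that coordinate s and s' take the boundary values ±(2^{m−1} − 1) with opposite signs (facing each other), while in the other coordinate s = s' and p = p' in that coordinate. -/
import Mathlib


/-- The uniform `4^n`-ary QAM constellation. -/
def Q (n : ℕ) : Set (ℤ × ℤ) :=
  {p | Odd p.1 ∧ Odd p.2 ∧ |p.1| ≤ 2 ^ n - 1 ∧ |p.2| ≤ 2 ^ n - 1}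

/-- The `(3×4^m)`-ary cross constellation. -/
def X (m : ℕ) : Set (ℤ × ℤ) :=
  {p | Odd p.1 ∧ Odd p.2 ∧ |p.1| ≤ 2 ^ (m + 1) - 1 ∧ |p.2| ≤ 2 ^ (m + 1) - 1 ∧
    ¬((2 : ℤ) ^ m < |p.1| ∧ (2 : ℤ) ^ m < |p.2|)}

/-- 1D lemma: equal coordinate case. -/
lemma aux_eq (M a b u v : ℤ) (hM : 2 ≤ M) (ha : |a| ≤ M - 1) (hb : |b| ≤ M - 1)
    (hu : Odd u) (hv : Odd v) (heq : M * u + a = M * v + b) : u = v ∧ a = b := by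
  obtain ⟨i, hi⟩ := hu
  obtain ⟨j, hj⟩ := hv
  obtain ⟨k, hk⟩ : ∃ k : ℤ, i - j = k := ⟨i - j, rfl⟩
  have huv : u - v = 2 * k := by omega
  have hMk : 2 * M * k + a - b = 0 := by nlinarith [heq]
  rw [abs_le] at ha hb
  have hK : -(2 * M) < 2 * M * k ∧ 2 * M * k < 2 * M := by
    constructor <;> nlinarith
  have hk1 : k = 0 := by
    rcases lt_trichotomy k 0 with h | h | h
    · nlinarith [hK.1]
    · exact h
    · nlinarith [hK.2]
  rw [hk1] at huv hMk
  constructor <;> [omega; linarith]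

/-- 1D lemma: differing coordinate case. -/
lemma aux_ne (M a b u v d : ℤ) (hM : 2 ≤ M) (ha : |a| ≤ M - 1) (hb : |b| ≤ M - 1)
    (hu : Odd u) (hv : Odd v) (hne : u ≠ v) (hd : d = 2 ∨ d = -2)
    (heq : M * u + a - (M * v + b) = d) :
    |u - v| = 2 ∧ a = -b ∧ |a| = M - 1 := by
  obtain ⟨i, hi⟩ := hu
  obtain ⟨j, hj⟩ := hv
  obtain ⟨k, hk⟩ : ∃ k : ℤ, i - j = k := ⟨i - j, rfl⟩
  have huv : u - v = 2 * k := by omega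
  have hMk : 2 * M * k + a - b = d := by nlinarith [heq]
  rw [abs_le] at ha hb
  have hK : -(2 * M) - 1 < 2 * M * k ∧ 2 * M * k < 2 * M + 1 := by
    constructor <;> (rcases hd with h | h <;> nlinarith)
  have hk1 : k = 1 ∨ k = -1 := by
    have hk0 : k ≠ 0 := by
      intro h; apply hne; omega
    rcases lt_trichotomy k 0 with h | h | h
    · right
      by_contra hne1
      have : k ≤ -2 := by omega
      nlinarith [hK.1]
    · exact absurd h hk0
    · left
      by_contra hne1
      have : 2 ≤ k := by omega
      nlinarith [hK.2]
  rcases hk1 with h | h <;> rw [h] at huv hMk <;> norm_num at huv hMk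
  · have ha1 : a = -(M - 1) := by omega
    refine ⟨by rw [huv]; norm_num, by omega, ?_⟩
    rw [ha1, abs_neg, abs_of_nonneg (by omega)]
  · have ha1 : a = M - 1 := by omega
    refine ⟨by rw [huv]; norm_num, by omega, ?_⟩
    rw [ha1, abs_of_nonneg (by omega)]

/-- adjacent clusters: if `p = 2^{m−1}t + s` and `p' = 2^{m−1}t' + s'`
with `t ≠ t'` are at squared distance 4, then `t, t'` differ in exactly one
coordinate by 2 in absolute value; in that coordinate `s, s'` take the boundary
values `±(2^{m−1} − 1)` with opposite signs, and in the other coordinate `s = s'`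
and `p = p'`. -/
theorem adjacent_clusters (m : ℕ) (hm : 2 ≤ m) (t t' s s' : ℤ × ℤ)
    (ht : t ∈ X 1) (ht' : t' ∈ X 1) (hs : s ∈ Q (m - 1)) (hs' : s' ∈ Q (m - 1))
    (hne : t ≠ t')
    (hmem : ((2 : ℤ) ^ (m - 1)) • t + s ∈ X m)
    (hmem' : ((2 : ℤ) ^ (m - 1)) • t' + s' ∈ X m)
    (hdist : ((((2 : ℤ) ^ (m - 1)) • t + s).1 - (((2 : ℤ) ^ (m - 1)) • t' + s').1) ^ 2 +
      ((((2 : ℤ) ^ (m - 1)) • t + s).2 - (((2 : ℤ) ^ (m - 1)) • t' + s').2) ^ 2 = 4) :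
    (t.1 ≠ t'.1 ∧ t.2 = t'.2 ∧ |t.1 - t'.1| = 2 ∧
      s.1 = -s'.1 ∧ |s.1| = 2 ^ (m - 1) - 1 ∧ s.2 = s'.2 ∧
      (((2 : ℤ) ^ (m - 1)) • t + s).2 = (((2 : ℤ) ^ (m - 1)) • t' + s').2) ∨
    (t.2 ≠ t'.2 ∧ t.1 = t'.1 ∧ |t.2 - t'.2| = 2 ∧
      s.2 = -s'.2 ∧ |s.2| = 2 ^ (m - 1) - 1 ∧ s.1 = s'.1 ∧
      (((2 : ℤ) ^ (m - 1)) • t + s).1 = (((2 : ℤ) ^ (m - 1)) • t' + s').1) := by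
  set M : ℤ := (2 : ℤ) ^ (m - 1) with hM
  have hM2 : 2 ≤ M := by
    calc (2 : ℤ) = 2 ^ 1 := by norm_num
    _ ≤ 2 ^ (m - 1) := by
      apply pow_le_pow_right₀ (by norm_num); omega
  obtain ⟨ht1, ht2, -⟩ := ht
  obtain ⟨ht1', ht2', -⟩ := ht'
  obtain ⟨hs1, hs2, hsa1, hsa2⟩ := hs
  obtain ⟨hs1', hs2', hsa1', hsa2'⟩ := hs'
  obtain ⟨hp1, hp2, -⟩ := hmem
  obtain ⟨hp1', hp2', -⟩ := hmem'
  simp only [Prod.fst_add, Prod.snd_add, Prod.smul_fst, Prod.smul_snd,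
    smul_eq_mul] at hdist hp1 hp2 hp1' hp2' ⊢
  -- differences are even
  obtain ⟨e1, he1⟩ : Even ((M * t.1 + s.1) - (M * t'.1 + s'.1)) := Odd.sub_odd hp1 hp1'
  obtain ⟨e2, he2⟩ : Even ((M * t.2 + s.2) - (M * t'.2 + s'.2)) := Odd.sub_odd hp2 hp2'
  rw [he1, he2] at hdist
  have he : e1 ^ 2 + e2 ^ 2 = 1 := by nlinarith
  have hb1 : -1 ≤ e1 ∧ e1 ≤ 1 := by constructor <;> nlinarith [sq_nonneg e2]
  have hb2 : -1 ≤ e2 ∧ e2 ≤ 1 := by constructor <;> nlinarith [sq_nonneg e1]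
  have hcases : (e2 = 0 ∧ (e1 = 1 ∨ e1 = -1)) ∨ (e1 = 0 ∧ (e2 = 1 ∨ e2 = -1)) := by
    obtain ⟨l1, r1⟩ := hb1; obtain ⟨l2, r2⟩ := hb2
    interval_cases e1 <;> interval_cases e2 <;> omega
  rcases hcases with ⟨h2z, h1d⟩ | ⟨h1z, h2d⟩
  · -- second coordinates equal
    have heq2 : M * t.2 + s.2 = M * t'.2 + s'.2 := by omega
    obtain ⟨htt2, hss2⟩ := aux_eq M s.2 s'.2 t.2 t'.2 hM2 hsa2 hsa2' ht2 ht2' heq2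
    have htne1 : t.1 ≠ t'.1 := by
      intro h; exact hne (Prod.ext h htt2)
    have hd : (M * t.1 + s.1) - (M * t'.1 + s'.1) = 2 ∨
        (M * t.1 + s.1) - (M * t'.1 + s'.1) = -2 := by
      rcases h1d with h | h <;> [left; right] <;> omega
    have := aux_ne M s.1 s'.1 t.1 t'.1 ((M * t.1 + s.1) - (M * t'.1 + s'.1))
      hM2 hsa1 hsa1' ht1 ht1' htne1 hd rfl
    exact Or.inl ⟨htne1, htt2, this.1, this.2.1, this.2.2, hss2, by omega⟩
  · -- first coordinates equal
    have heq1 : M * t.1 + s.1 = M * t'.1 + s'.1 := by omega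
    obtain ⟨htt1, hss1⟩ := aux_eq M s.1 s'.1 t.1 t'.1 hM2 hsa1 hsa1' ht1 ht1' heq1
    have htne2 : t.2 ≠ t'.2 := by
      intro h; exact hne (Prod.ext htt1 h)
    have hd : (M * t.2 + s.2) - (M * t'.2 + s'.2) = 2 ∨
        (M * t.2 + s.2) - (M * t'.2 + s'.2) = -2 := by
      rcases h2d with h | h <;> [left; right] <;> omega
    have := aux_ne M s.2 s'.2 t.2 t'.2 ((M * t.2 + s.2) - (M * t'.2 + s'.2))
      hM2 hsa2 hsa2' ht2 ht2' htne2 hd rfl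
    exact Or.inr ⟨htne2, htt1, this.1, this.2.1, this.2.2, hss1, by omega⟩
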